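/- The tensors 𝒱₁,…,𝒱_m produced by m breakdown-free steps of the tensor T-global Arnoldi process form an orthonormal family: ⟨𝒱_i, 𝒱_j⟩ = δ_{ij}, and each 𝒱_j lies in the tensor Krylov subspace spanned by {𝒱, 𝒜⋆𝒱, …, 𝒜^{j-1}⋆𝒱}. -/

import Mathlib

/-- The T-product of two third-order tensors. -/
def tprod3 {n₁ n₂ m n₃ : ℕ} (A : Fin n₁ → Fin n₂ → Fin n₃ → ℝ)
    (B : Fin n₂ → Fin m → Fin n₃ → ℝ) : Fin n₁ → Fin m → Fin n₃ → ℝ :=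
  fun i j k => ∑ t : Fin n₃, ∑ l : Fin n₂, A i l (k - t) * B l j t

/-- The entrywise inner product of two third-order tensors. -/
def tinner {n₁ n₂ n₃ : ℕ} (A B : Fin n₁ → Fin n₂ → Fin n₃ → ℝ) : ℝ :=
  ∑ i : Fin n₁, ∑ j : Fin n₂, ∑ k : Fin n₃, A i j k * B i j k

/-- The Frobenius norm of a third-order tensor. -/
noncomputable def tnorm {n₁ n₂ n₃ : ℕ} (A : Fin n₁ → Fin n₂ → Fin n₃ → ℝ) : ℝ :=
  Real.sqrt (tinner A A)


section lemmas
variable {n₁ n₂ n₃ : ℕ}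

lemma tinner_self_nonneg (X : Fin n₁ → Fin n₂ → Fin n₃ → ℝ) : 0 ≤ tinner X X := by
  refine Finset.sum_nonneg fun _ _ => Finset.sum_nonneg fun _ _ => Finset.sum_nonneg fun _ _ => mul_self_nonneg _

lemma tinner_self_eq (X : Fin n₁ → Fin n₂ → Fin n₃ → ℝ) : tinner X X = tnorm X ^ 2 :=
  (Real.sq_sqrt (tinner_self_nonneg X)).symm

lemma tinner_comm (X Y : Fin n₁ → Fin n₂ → Fin n₃ → ℝ) : tinner X Y = tinner Y X := by
  simp [tinner, mul_comm]

lemma tinner_smul_left (a : ℝ) (X Y : Fin n₁ → Fin n₂ → Fin n₃ → ℝ) :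
    tinner (a • X) Y = a * tinner X Y := by
  simp [tinner, Finset.mul_sum, mul_assoc]

lemma tinner_smul_right (a : ℝ) (X Y : Fin n₁ → Fin n₂ → Fin n₃ → ℝ) :
    tinner X (a • Y) = a * tinner X Y := by
  simp [tinner, Finset.mul_sum, mul_left_comm]

lemma tinner_sub_left (X Y Z : Fin n₁ → Fin n₂ → Fin n₃ → ℝ) :
    tinner (X - Y) Z = tinner X Z - tinner Y Z := by
  simp [tinner, sub_mul, Finset.sum_sub_distrib]

lemma tinner_add_left (X Y Z : Fin n₁ → Fin n₂ → Fin n₃ → ℝ) :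
    tinner (X + Y) Z = tinner X Z + tinner Y Z := by
  simp [tinner, add_mul, Finset.sum_add_distrib]

lemma tinner_zero_left (Z : Fin n₁ → Fin n₂ → Fin n₃ → ℝ) : tinner 0 Z = 0 := by
  simp [tinner]

lemma tinner_sum_left {ι : Type*} (t : Finset ι) (f : ι → Fin n₁ → Fin n₂ → Fin n₃ → ℝ)
    (Y : Fin n₁ → Fin n₂ → Fin n₃ → ℝ) :
    tinner (∑ i ∈ t, f i) Y = ∑ i ∈ t, tinner (f i) Y := by
  classical
  induction t using Finset.induction_on with
  | empty => simp [tinner_zero_left]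
  | insert _ _ h ih => simp [Finset.sum_insert h, tinner_add_left, ih]

end lemmas

section tprodlin
variable {n₁ n₂ m n₃ : ℕ} (A : Fin n₁ → Fin n₂ → Fin n₃ → ℝ)

lemma tprod3_smul (a : ℝ) (B : Fin n₂ → Fin m → Fin n₃ → ℝ) :
    tprod3 A (a • B) = a • tprod3 A B := by
  funext i j k
  simp [tprod3, Finset.mul_sum, mul_left_comm]

lemma tprod3_add (B C : Fin n₂ → Fin m → Fin n₃ → ℝ) :
    tprod3 A (B + C) = tprod3 A B + tprod3 A C := by
  funext i j k
  simp [tprod3, mul_add, Finset.sum_add_distrib]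

end tprodlin

/-- The tensors 𝒱₁,…,𝒱_m produced by m breakdown-free steps of the tensor
T-global Arnoldi process are orthonormal and each 𝒱_j lies in the tensor Krylov
subspace spanned by {𝒱, 𝒜⋆𝒱, …, 𝒜^{j-1}⋆𝒱}. -/
theorem tglobal_arnoldi_orthonormal_krylov {n s p m : ℕ}
    (A : Fin n → Fin n → Fin p → ℝ)
    (W : Fin n → Fin s → Fin p → ℝ)
    (V : Fin (m + 1) → Fin n → Fin s → Fin p → ℝ)
    (h : Fin (m + 1) → Fin m → ℝ)
    (hW : tnorm W ≠ 0)
    (hinit : V 0 = (tnorm W)⁻¹ • W)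
    -- Gram–Schmidt coefficients
    (hcoef : ∀ (j : Fin m) (i : Fin (m + 1)), i.val ≤ j.val →
      h i j = tinner (V i) (tprod3 A (V j.castSucc)))
    -- normalization coefficient
    (hnorm : ∀ j : Fin m,
      h j.succ j = tnorm (tprod3 A (V j.castSucc) -
        ∑ i ∈ Finset.univ.filter (fun i : Fin (m + 1) => i.val ≤ j.val), h i j • V i))
    -- no breakdown
    (hbd : ∀ j : Fin m, h j.succ j ≠ 0)
    -- next basis tensor
    (hstep : ∀ j : Fin m,
      V j.succ = (h j.succ j)⁻¹ • (tprod3 A (V j.castSucc) -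
        ∑ i ∈ Finset.univ.filter (fun i : Fin (m + 1) => i.val ≤ j.val), h i j • V i)) :
    (∀ i j : Fin m, tinner (V i.castSucc) (V j.castSucc) = if i = j then 1 else 0) ∧
    (∀ j : Fin m, ∃ α : ℕ → ℝ,
      V j.castSucc = ∑ i ∈ Finset.range (j.val + 1), α i • (fun X => tprod3 A X)^[i] W) := by
    classical
  -- Part 1: orthonormality
  have ortho : ∀ N : ℕ, N ≤ m → ∀ a b : Fin (m + 1), a.val ≤ N → b.val ≤ N →
      tinner (V a) (V b) = if a = b then 1 else 0 := by
    intro N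
    induction N with
    | zero =>
      intro _ a b ha hb
      have ha0 : a = 0 := Fin.ext (Nat.le_zero.mp ha)
      have hb0 : b = 0 := Fin.ext (Nat.le_zero.mp hb)
      subst ha0; subst hb0
      rw [if_pos rfl, hinit, tinner_smul_left, tinner_smul_right, tinner_self_eq]
      field_simp
    | succ N ih =>
      intro hNm a b ha hb
      have hN : N ≤ m := Nat.le_of_succ_le hNm
      set j : Fin m := ⟨N, hNm⟩ with hjdef
      have hjv : (j : Fin m).val = N := rfl
      have hjsv : (j.succ : Fin (m + 1)).val = N + 1 := rfl
      have hjcv : (j.castSucc : Fin (m + 1)).val = N := rfl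
      have key : ∀ b : Fin (m + 1), b.val ≤ N → tinner (V j.succ) (V b) = 0 := by
        intro b hb
        have hbj : b.val ≤ j.val := hb
        rw [hstep j, tinner_smul_left, tinner_sub_left, tinner_sum_left]
        simp only [tinner_smul_left]
        have h1 : tinner (tprod3 A (V j.castSucc)) (V b) = h b j := by
          rw [tinner_comm]; exact (hcoef j b hbj).symm
        have h2 : (∑ i ∈ Finset.univ.filter (fun i : Fin (m + 1) => i.val ≤ j.val),
            h i j * tinner (V i) (V b)) = h b j := by
          have hc : ∀ i ∈ Finset.univ.filter (fun i : Fin (m + 1) => i.val ≤ j.val),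
              h i j * tinner (V i) (V b) = if i = b then h i j else 0 := by
            intro i hi
            rw [ih hN i b (Finset.mem_filter.mp hi).2 hb]
            simp [mul_ite]
          rw [Finset.sum_congr rfl hc, Finset.sum_ite_eq' _ b (fun i => h i j)]
          simp [hbj]
        rw [h1, h2]
        ring
      have diag : tinner (V j.succ) (V j.succ) = 1 := by
        rw [hstep j, tinner_smul_left, tinner_smul_right, tinner_self_eq, ← hnorm j]
        have hc := hbd j
        field_simp
      by_cases haN : a.val ≤ N
      · by_cases hbN : b.val ≤ N
        · exact ih hN a b haN hbN
        · have hbv : b = j.succ := Fin.ext (by omega)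
          subst hbv
          have hne : a ≠ j.succ := by
            intro hh; rw [hh] at haN; omega
          rw [if_neg hne, tinner_comm]
          exact key a haN
      · have hav : a = j.succ := Fin.ext (by omega)
        subst hav
        by_cases hbN : b.val ≤ N
        · have hne : j.succ ≠ b := by
            intro hh; rw [← hh] at hbN; exact absurd hbN (by omega)
          rw [if_neg hne]
          exact key b hbN
        · have hbv : b = j.succ := Fin.ext (by omega)
          subst hbv
          rw [if_pos rfl]
          exact diag
  -- Part 2: Krylov membership
  let F : (Fin n → Fin s → Fin p → ℝ) →ₗ[ℝ] (Fin n → Fin s → Fin p → ℝ) :=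
    { toFun := fun X => tprod3 A X
      map_add' := tprod3_add A
      map_smul' := fun a B => tprod3_smul A a B }
  have subset_lem : ∀ a b : ℕ, a ≤ b →
      (Set.range fun i : Fin a => (fun X => tprod3 A X)^[i.val] W) ⊆
      (Set.range fun i : Fin b => (fun X => tprod3 A X)^[i.val] W) := by
    rintro a b hab x ⟨i, rfl⟩
    exact ⟨⟨i.val, lt_of_lt_of_le i.2 hab⟩, rfl⟩
  have mem : ∀ N : ℕ, ∀ k : Fin (m + 1), k.val ≤ N →
      V k ∈ Submodule.span ℝ
        (Set.range fun i : Fin (k.val + 1) => (fun X => tprod3 A X)^[i.val] W) := by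
    intro N
    induction N with
    | zero =>
      intro k hk
      have hk0 : k = 0 := Fin.ext (Nat.le_zero.mp hk)
      subst hk0
      rw [hinit]
      exact Submodule.smul_mem _ _ (Submodule.subset_span ⟨0, rfl⟩)
    | succ N ih =>
      intro k hk
      by_cases hkN : k.val ≤ N
      · exact ih k hkN
      · have hkval : k.val = N + 1 := le_antisymm hk (not_le.mp hkN)
        have hNm : N < m := by omega
        set j : Fin m := ⟨N, hNm⟩ with hjdef
        have hjv : (j : Fin m).val = N := rfl
        have hjsv : (j.succ : Fin (m + 1)).val = N + 1 := rfl
        have hjcv : (j.castSucc : Fin (m + 1)).val = N := rfl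
        have hkj : k = j.succ := Fin.ext (by simpa using hkval)
        subst hkj
        rw [hstep j]
        apply Submodule.smul_mem
        apply Submodule.sub_mem
        · have hv := ih j.castSucc (by simp [j])
          have hmap : F (V j.castSucc) ∈ Submodule.map F (Submodule.span ℝ
              (Set.range fun i : Fin (j.castSucc.val + 1) => (fun X => tprod3 A X)^[i.val] W)) :=
            Submodule.mem_map_of_mem hv
          rw [Submodule.map_span] at hmap
          have himg : F '' (Set.range fun i : Fin (j.castSucc.val + 1) =>
              (fun X => tprod3 A X)^[i.val] W) ⊆
              (Set.range fun i : Fin (j.succ.val + 1) => (fun X => tprod3 A X)^[i.val] W) := by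
            rintro _ ⟨_, ⟨i, rfl⟩, rfl⟩
            refine ⟨⟨i.val + 1, by omega⟩, ?_⟩
            show (fun X => tprod3 A X)^[i.val + 1] W = F ((fun X => tprod3 A X)^[i.val] W)
            rw [Function.iterate_succ_apply']
            rfl
          exact Submodule.span_mono himg hmap
        · apply Submodule.sum_mem
          intro i hi
          apply Submodule.smul_mem
          have hij : i.val ≤ j.val := (Finset.mem_filter.mp hi).2
          have hii := ih i (le_trans hij (by simp [j]))
          exact Submodule.span_mono (subset_lem _ _ (by omega)) hii
  constructor
  · intro i j
    exact (ortho m le_rfl i.castSucc j.castSucc (by omega) (by omega)).trans (by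
      by_cases hij : i = j
      · simp [hij]
      · rw [if_neg hij, if_neg (fun hh => hij (Fin.castSucc_injective m hh))])
  · intro j
    have hmem := mem m j.castSucc (by omega)
    rw [Submodule.mem_span_range_iff_exists_fun] at hmem
    obtain ⟨c, hc⟩ := hmem
    refine ⟨fun nn => if hn : nn < j.val + 1 then c ⟨nn, hn⟩ else 0, ?_⟩
    rw [← hc]
    rw [Finset.sum_range (fun i => _)]
    apply Finset.sum_congr rfl
    intro i _
    simp
    intro hh
    have hi2 := i.2
    simp at hi2
    omega
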